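/- Let α be a type of ground atoms, let A be a set of atoms, and let R be a set of linear ground rules over α. Then the union U of all censors for A and R is itself a censor for A and R; consequently U is the unique optimal censor for A and R, it contains every censor, and the intersection of all optimal censors equals U and is a censor. -/
import Mathlib


/-- A ground rule: a finite body and a family of finite head images. -/
structure GroundRule (α : Type*) where
  body : Finset α
  heads : Set (Finset α)

/-- A set of atoms `C` satisfies a ground rule `(B, Q)` if `B ⊆ C` implies
that `I ⊆ C` for some `I ∈ Q`. -/
def RuleSat {α : Type*} (C : Set α) (r : GroundRule α) : Prop :=
  ↑r.body ⊆ C → ∃ I ∈ r.heads, ↑I ⊆ C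

/-- `C` satisfies a set of ground rules if it satisfies every rule in it. -/
def SatisfiesSet {α : Type*} (C : Set α) (R : Set (GroundRule α)) : Prop :=
  ∀ r ∈ R, RuleSat C r

/-- A censor for an ambient set `A` and rules `R` is a subset of `A` satisfying `R`. -/
def Censor {α : Type*} (A : Set α) (R : Set (GroundRule α)) (C : Set α) : Prop :=
  C ⊆ A ∧ SatisfiesSet C R

/-- An optimal censor is a censor that is maximal w.r.t. set inclusion. -/
def OptimalCensor {α : Type*} (A : Set α) (R : Set (GroundRule α)) (C : Set α) : Prop :=
  Censor A R C ∧ ∀ C', Censor A R C' → C ⊆ C' → C' = C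

/-- for linear rules, the union of all censors is a censor,
it is the unique optimal censor, contains every censor, and the intersection
of all optimal censors equals it and is a censor. -/
theorem stmt2 {α : Type*} (A : Set α) (R : Set (GroundRule α))
    (hlin : ∀ r ∈ R, ∃ a, r.body = {a}) :
    Censor A R (⋃₀ {C | Censor A R C}) ∧
    OptimalCensor A R (⋃₀ {C | Censor A R C}) ∧
    (∀ C, OptimalCensor A R C → C = ⋃₀ {C | Censor A R C}) ∧
    (∀ C, Censor A R C → C ⊆ ⋃₀ {C | Censor A R C}) ∧
    ⋂₀ {C | OptimalCensor A R C} = ⋃₀ {C | Censor A R C} ∧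
    Censor A R (⋂₀ {C | OptimalCensor A R C}) := by

  have hsub : ∀ C, Censor A R C → C ⊆ ⋃₀ {C | Censor A R C} :=
    fun C hC => Set.subset_sUnion_of_mem hC
  have hU : Censor A R (⋃₀ {C | Censor A R C}) := by
    constructor
    · intro x hx
      obtain ⟨C, hC, hxC⟩ := hx
      exact hC.1 hxC
    · intro r hr hbody
      obtain ⟨a, ha⟩ := hlin r hr
      have haU : a ∈ ⋃₀ {C | Censor A R C} := by
        apply hbody; rw [ha]; simp
      obtain ⟨C, hC, haC⟩ := haU
      obtain ⟨I, hI, hIC⟩ := hC.2 r hr (by rw [ha]; simpa using haC)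
      exact ⟨I, hI, hIC.trans (hsub C hC)⟩
  have hopt : OptimalCensor A R (⋃₀ {C | Censor A R C}) :=
    ⟨hU, fun C' hC' hUC' => Set.Subset.antisymm (hsub C' hC') hUC'⟩
  have huniq : ∀ C, OptimalCensor A R C → C = ⋃₀ {C | Censor A R C} :=
    fun C hC => (hC.2 _ hU (hsub C hC.1)).symm
  have hinter : ⋂₀ {C | OptimalCensor A R C} = ⋃₀ {C | Censor A R C} := by
    apply Set.Subset.antisymm
    · exact Set.sInter_subset_of_mem hopt
    · intro x hx C hC
      rw [huniq C hC]; exact hx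
  exact ⟨hU, hopt, huniq, hsub, hinter, hinter ▸ hU⟩
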